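/- Let n ∈ ℕ, A = (a_{ij}) ∈ Mₙ(ℝ) and α̂ = (α₁,…,αₙ) ∈ (0,1]ⁿ. Then the α̂-order spectrum satisfies the Geršgorin-type inclusion σ_{α̂}(A) ⊆ ⋃_{i=1}^{n} { z ∈ ℂ : |a_{ii} − z^{α_i}| ≤ r_i(A) }, where r_i(A) = Σ_{j≠i} |a_{ij}|. -/

import Mathlib

/-- The matrix `diag(z^{α₁},…,z^{αₙ}) - M`, with complex powers in the principal branch
(`Complex.cpow`, whose argument lies in `(-π, π]`). -/
noncomputable def fracMat {n : ℕ} (α : Fin n → ℝ) (M : Matrix (Fin n) (Fin n) ℂ) (z : ℂ) :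
    Matrix (Fin n) (Fin n) ℂ :=
  Matrix.diagonal (fun i => z ^ (α i : ℂ)) - M

/-- The `α`-order spectrum of a (complex) matrix `M`. -/
noncomputable def fracSpec {n : ℕ} (α : Fin n → ℝ) (M : Matrix (Fin n) (Fin n) ℂ) : Set ℂ :=
  {z : ℂ | (fracMat α M z).det = 0}

/-- Geršgorin-type inclusion for the `α̂`-order spectrum: the `α̂`-order
spectrum of a real matrix `A` is contained in the union of the sets
`{z : |a_{ii} − z^{α_i}| ≤ r_i(A)}`, where `r_i(A) = Σ_{j≠i} |a_{ij}|`. -/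
theorem fracSpec_subset_gershgorin
    {n : ℕ} (A : Matrix (Fin n) (Fin n) ℝ) (α : Fin n → ℝ)
    (hα : ∀ i, α i ∈ Set.Ioc (0 : ℝ) 1) :
    fracSpec α (A.map (fun a => (a : ℂ))) ⊆
      ⋃ i : Fin n, {z : ℂ |
        ‖(A i i : ℂ) - z ^ (α i : ℂ)‖ ≤ ∑ j ∈ Finset.univ.erase i, |A i j|} := by
  intro z hz
  by_contra hcon
  simp only [Set.mem_iUnion, Set.mem_setOf_eq, not_exists, not_le] at hcon
  apply det_ne_zero_of_sum_row_lt_diag (A := fracMat α (A.map (fun a => (a : ℂ))) z) _ hz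
  intro k
  have h1 : ∀ j ∈ Finset.univ.erase k,
      ‖fracMat α (A.map (fun a => (a : ℂ))) z k j‖ = |A k j| := by
    intro j hj
    have hjk : j ≠ k := Finset.ne_of_mem_erase hj
    simp [fracMat, Matrix.diagonal_apply_ne' _ hjk, Complex.norm_real]
  rw [Finset.sum_congr rfl h1]
  have h2 : ‖fracMat α (A.map (fun a => (a : ℂ))) z k k‖
      = ‖(A k k : ℂ) - z ^ (α k : ℂ)‖ := by
    rw [norm_sub_rev]
    simp [fracMat]
  rw [h2]
  exact hcon k
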